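/- Let K and K̃ be continuous functions on [0,1]×[−1,1] that are odd in the second variable (K(x,−t) = −K(x,t)) and vanish for |t| > x, and let S(x,λ) = sin(ρx)/ρ + ∫₀ˣ K(x,t) sin(ρt)/ρ dt and S̃(x,λ) = sin(ρx)/ρ + ∫₀ˣ K̃(x,t) sin(ρt)/ρ dt with λ = ρ². Define Q(x,t) = 2(K(x,2t−x) + K̃(x,2t−x) + ∫_{2t−x}^{x} K(x,τ)K̃(x,2t−τ) dτ) for 0 ≤ t ≤ x ≤ 1. Then for all x ∈ [0,1] and all complex ρ ≠ 0: 1 − 2λ·S(x,λ)·S̃(x,λ) = cos(2ρx) + ∫₀ˣ Q(x,t) cos(2ρt) dt. -/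

import Mathlib

open Real MeasureTheory intervalIntegral Set



lemma corner_zero (K : ℝ → ℝ → ℂ)
    (hKcont : ContinuousOn (fun p : ℝ × ℝ => K p.1 p.2) (Set.Icc 0 1 ×ˢ Set.Icc (-1) 1))
    (hKsupp : ∀ x t, x < |t| → K x t = 0) (s : ℝ) (hs : |s| = 1) :
    K 1 s = 0 := by
  have hmap : ContinuousOn (fun y : ℝ => K y s) (Set.Icc 0 1) := by
    have : ContinuousOn ((fun p : ℝ × ℝ => K p.1 p.2) ∘ (fun y => (y, s))) (Set.Icc 0 1) := by
      apply hKcont.comp (Continuous.continuousOn (by fun_prop))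
      intro y hy
      exact ⟨hy, by constructor <;> [nlinarith [abs_nonneg s, neg_abs_le s, hs]; nlinarith [le_abs_self s, hs]]⟩
    exact this
  have h1 : Filter.Tendsto (fun y : ℝ => K y s) (nhdsWithin 1 (Set.Ico 0 1)) (nhds (K 1 s)) := by
    have := (hmap 1 (by simp)).tendsto
    exact this.mono_left (nhdsWithin_mono _ (by intro y hy; exact ⟨hy.1, le_of_lt hy.2⟩))
  have h2 : Filter.Tendsto (fun y : ℝ => K y s) (nhdsWithin 1 (Set.Ico 0 1)) (nhds 0) := by
    apply Filter.Tendsto.congr' _ tendsto_const_nhds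
    filter_upwards [self_mem_nhdsWithin] with y hy
    exact (hKsupp y s (by rw [hs]; exact hy.2)).symm
  have hne : (nhdsWithin (1:ℝ) (Set.Ico 0 1)).NeBot := by
    apply mem_closure_iff_nhdsWithin_neBot.mp
    rw [closure_Ico (by norm_num : (0:ℝ) ≠ 1)]
    simp
  exact tendsto_nhds_unique h1 h2

lemma sect_cont (K : ℝ → ℝ → ℂ)
    (hKcont : ContinuousOn (fun p : ℝ × ℝ => K p.1 p.2) (Set.Icc 0 1 ×ˢ Set.Icc (-1) 1))
    (hKsupp : ∀ x t, x < |t| → K x t = 0) (x : ℝ) (hx : x ∈ Set.Icc (0:ℝ) 1) :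
    Continuous (fun t => K x t) := by
  have hcOn : ContinuousOn (fun t => K x t) (Set.Icc (-1) 1) := by
    have : ContinuousOn ((fun p : ℝ × ℝ => K p.1 p.2) ∘ (fun t => (x, t))) (Set.Icc (-1) 1) := by
      apply hKcont.comp (Continuous.continuousOn (by fun_prop))
      intro t ht; exact ⟨hx, ht⟩
    exact this
  have hzero1 : ∀ t, 1 ≤ |t| → K x t = 0 := by
    intro t ht
    rcases lt_or_eq_of_le ht with h | h
    · exact hKsupp x t (lt_of_le_of_lt hx.2 h)
    · rcases lt_or_eq_of_le hx.2 with h2 | h2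
      · exact hKsupp x t (by rw [← h]; exact h2)
      · rw [h2]; exact corner_zero K hKcont hKsupp t h.symm
  rw [continuous_iff_continuousAt]
  intro t
  rcases lt_trichotomy |t| 1 with h | h | h
  · have hmem : Set.Icc (-1:ℝ) 1 ∈ nhds t := by
      rcases abs_lt.mp h with ⟨h1, h2⟩
      exact Icc_mem_nhds h1 h2
    exact hcOn.continuousAt hmem
  · have hA : ContinuousWithinAt (fun s => K x s) (Set.Icc (-1) 1) t :=
      hcOn t (by rcases abs_le.mp h.le with ⟨h1, h2⟩; exact ⟨h1, h2⟩)
    have hB : ContinuousWithinAt (fun s => K x s) {s : ℝ | 1 < |s|} t := by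
      apply continuousWithinAt_const.congr
      · intro y hy; exact hzero1 y (le_of_lt hy)
      · exact hzero1 t h.ge
    have := hA.union hB
    rw [← continuousWithinAt_univ]
    have huniv : Set.Icc (-1:ℝ) 1 ∪ {s : ℝ | 1 < |s|} = Set.univ := by
      ext s; simp only [Set.mem_union, Set.mem_Icc, Set.mem_setOf_eq, Set.mem_univ, iff_true]
      rcases le_or_gt (|s|) 1 with hs | hs
      · left; exact abs_le.mp hs
      · right; exact hs
    rw [← huniv]; exact this
  · have hev : (fun s => K x s) =ᶠ[nhds t] (fun _ => 0) := by
      have hopen : IsOpen {s : ℝ | 1 < |s|} := isOpen_lt continuous_const continuous_abs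
      filter_upwards [hopen.mem_nhds h] with s hs
      exact hzero1 s (le_of_lt hs)
    exact (continuousAt_const).congr hev.symm

lemma supp_le (f : ℝ → ℂ) (hf : Continuous f) (x : ℝ) (hx : 0 ≤ x)
    (hsupp : ∀ t, x < |t| → f t = 0) : ∀ t, x ≤ |t| → f t = 0 := by
  intro t ht
  rcases lt_or_eq_of_le ht with h | h
  · exact hsupp t h
  · have key : ∀ (l : Filter ℝ) [l.NeBot], l ≤ nhds t → (∀ᶠ y in l, x < |y|) → f t = 0 := by
      intro l _ hl hev
      have h1 : Filter.Tendsto f l (nhds (f t)) := (hf.continuousAt.tendsto).mono_left hl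
      have h2 : Filter.Tendsto f l (nhds 0) := by
        apply Filter.Tendsto.congr' _ tendsto_const_nhds
        filter_upwards [hev] with y hy
        exact (hsupp y hy).symm
      exact tendsto_nhds_unique h1 h2
    rcases lt_trichotomy t 0 with h0 | h0 | h0
    · refine key (nhdsWithin t (Set.Iio t)) nhdsWithin_le_nhds ?_
      filter_upwards [self_mem_nhdsWithin] with y (hy : y < t)
      have : x = -t := by rw [h, abs_of_neg h0]
      calc x = -t := this
        _ < -y := by linarith
        _ ≤ |y| := neg_le_abs y
    · refine key (nhdsWithin t (Set.Ioi t)) nhdsWithin_le_nhds ?_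
      filter_upwards [self_mem_nhdsWithin] with y (hy : t < y)
      have hx0 : x = 0 := by rw [h, h0, abs_zero]
      rw [hx0]
      calc (0:ℝ) < y := by rw [← h0]; exact hy
        _ ≤ |y| := le_abs_self y
    · refine key (nhdsWithin t (Set.Ioi t)) nhdsWithin_le_nhds ?_
      filter_upwards [self_mem_nhdsWithin] with y (hy : t < y)
      have : x = t := by rw [h, abs_of_pos h0]
      calc x = t := this
        _ < y := hy
        _ ≤ |y| := le_abs_self y



lemma crossEq (f : ℝ → ℂ) (hf : Continuous f) (hodd : ∀ t, f (-t) = -f t) (x : ℝ) (ρ : ℂ) :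
    -(2 * Complex.sin (ρ*x) * ∫ t in (0:ℝ)..x, f t * Complex.sin (ρ*t))
      = 2 * ∫ u in (0:ℝ)..x, f (2*u - x) * Complex.cos (2*ρ*u) := by
  have hcos : ∀ c : ℂ, Continuous (fun u : ℝ => Complex.cos (c * u)) := by
    intro c; fun_prop
  have hint : ∀ a b : ℝ, IntervalIntegrable (fun u : ℝ => f (2*u - x) * Complex.cos (2*ρ*u)) volume a b := by
    intro a b
    apply Continuous.intervalIntegrable
    fun_prop
  have key1 : (∫ t in (0:ℝ)..x, f t * Complex.cos (ρ*(x+t)))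
      = 2 * ∫ u in (x/2)..x, f (2*u - x) * Complex.cos (2*ρ*u) := by
    have h := intervalIntegral.integral_comp_mul_sub
      (a := x/2) (b := x) (fun v : ℝ => f v * Complex.cos (ρ*(x+v))) two_ne_zero x
    rw [show 2*(x/2) - x = 0 by ring, show 2*x - x = x by ring] at h
    push_cast at h
    have h2 : (∫ u in (x/2)..x, f (2*u - x) * Complex.cos (ρ*(x+(2*u - x))))
        = ∫ u in (x/2)..x, f (2*u - x) * Complex.cos (2*ρ*u) := by
      apply intervalIntegral.integral_congr
      intro u _
      congr 1
      congr 1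
      push_cast
      ring
    rw [h2] at h
    rw [Complex.real_smul] at h
    push_cast at h
    linear_combination (-2:ℂ) * h
  have key2 : (∫ t in (0:ℝ)..x, f t * Complex.cos (ρ*(x-t)))
      = -(2 * ∫ u in (0:ℝ)..x/2, f (2*u - x) * Complex.cos (2*ρ*u)) := by
    have h := intervalIntegral.integral_comp_sub_mul
      (a := (0:ℝ)) (b := x/2) (fun v : ℝ => f v * Complex.cos (ρ*(x-v))) two_ne_zero x
    rw [show x - 2*(x/2) = 0 by ring, show x - 2*(0:ℝ) = x by ring] at h
    push_cast at h
    have h2 : (∫ u in (0:ℝ)..x/2, f (x - 2*u) * Complex.cos (ρ*(x-(x - 2*u))))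
        = ∫ u in (0:ℝ)..x/2, -(f (2*u - x) * Complex.cos (2*ρ*u)) := by
      apply intervalIntegral.integral_congr
      intro u _
      dsimp only
      have : f (x - 2*u) = -f (2*u - x) := by
        rw [show x - 2*u = -(2*u - x) by ring, hodd]
      rw [this]
      have : Complex.cos (ρ*(↑x-(↑x - 2*↑u))) = Complex.cos (2*ρ*↑u) := by
        congr 1; push_cast; ring
      rw [this]
      ring
    rw [h2, intervalIntegral.integral_neg] at h
    rw [Complex.real_smul] at h
    push_cast at h
    linear_combination (-2:ℂ) * h
  have hpt : ∀ t ∈ Set.uIcc (0:ℝ) x,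
      (-(2 * Complex.sin (ρ*x))) * (f t * Complex.sin (ρ*t))
        = f t * Complex.cos (ρ*(x+t)) - f t * Complex.cos (ρ*(x-t)) := by
    intro t _
    have h1 : (ρ*(↑x+↑t) + ρ*(↑x-↑t))/2 = ρ*x := by push_cast; ring
    have h2 : (ρ*(↑x+↑t) - ρ*(↑x-↑t))/2 = ρ*t := by push_cast; ring
    have h := Complex.cos_sub_cos (ρ*(↑x+↑t)) (ρ*(↑x-↑t))
    rw [h1, h2] at h
    linear_combination (-(f t)) * h
  calc -(2 * Complex.sin (ρ*x) * ∫ t in (0:ℝ)..x, f t * Complex.sin (ρ*t))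
      = ∫ t in (0:ℝ)..x, (-(2 * Complex.sin (ρ*x))) * (f t * Complex.sin (ρ*t)) := by
        rw [intervalIntegral.integral_const_mul]; ring
    _ = ∫ t in (0:ℝ)..x, (f t * Complex.cos (ρ*(x+t)) - f t * Complex.cos (ρ*(x-t))) :=
        intervalIntegral.integral_congr hpt
    _ = (∫ t in (0:ℝ)..x, f t * Complex.cos (ρ*(x+t)))
        - ∫ t in (0:ℝ)..x, f t * Complex.cos (ρ*(x-t)) := by
        apply intervalIntegral.integral_sub <;> (apply Continuous.intervalIntegrable; fun_prop)
    _ = 2 * ((∫ u in (0:ℝ)..x/2, f (2*u - x) * Complex.cos (2*ρ*u))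
        + ∫ u in (x/2)..x, f (2*u - x) * Complex.cos (2*ρ*u)) := by
        rw [key1, key2]; ring
    _ = 2 * ∫ u in (0:ℝ)..x, f (2*u - x) * Complex.cos (2*ρ*u) := by
        rw [intervalIntegral.integral_add_adjacent_intervals (hint 0 (x/2)) (hint (x/2) x)]



lemma even_double (h : ℝ → ℂ) (hint : ∀ a b : ℝ, IntervalIntegrable h volume a b)
    (heven : ∀ t, h (-t) = h t) (x : ℝ) :
    ∫ t in (-x)..x, h t = 2 * ∫ t in (0:ℝ)..x, h t := by
  rw [← intervalIntegral.integral_add_adjacent_intervals (hint (-x) 0) (hint 0 x)]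
  have h1 : ∫ t in (-x)..(0:ℝ), h t = ∫ t in (0:ℝ)..x, h t := by
    have h2 := intervalIntegral.integral_comp_neg (a := (0:ℝ)) (b := x) h
    rw [neg_zero] at h2
    rw [← h2]
    apply intervalIntegral.integral_congr
    intro t _
    exact heven t
  rw [h1]; ring

lemma inner_eq (g : ℝ → ℂ) (hg : Continuous g) (hgodd : ∀ s, g (-s) = -g s)
    (x : ℝ) (hx : 0 ≤ x) (hgs : ∀ s, x ≤ |s| → g s = 0) (ρ : ℂ) (t : ℝ) (ht : |t| ≤ x) :
    Complex.sin (ρ*t) * ∫ s in (-x)..x, g s * Complex.sin (ρ*s)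
      = -2 * ∫ u in (-x)..x, g (2*u - t) * Complex.cos (2*ρ*u) := by
  obtain ⟨htl, htr⟩ := abs_le.mp ht
  have hlo : -x ≤ (t-x)/2 := by linarith
  have hmid : (t-x)/2 ≤ (t+x)/2 := by linarith
  have hhi : (t+x)/2 ≤ x := by linarith
  have hGint : ∀ a b : ℝ, IntervalIntegrable (fun u => g (2*u - t) * Complex.cos (2*ρ*u)) volume a b := by
    intro a b; apply Continuous.intervalIntegrable; fun_prop
  -- step 1
  have key1 : (∫ s in (-x)..x, g s * Complex.cos (ρ*(t+s)))
      = 2 * ∫ u in ((t-x)/2)..((t+x)/2), g (2*u - t) * Complex.cos (2*ρ*u) := by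
    have h := intervalIntegral.integral_comp_mul_sub
      (a := (t-x)/2) (b := (t+x)/2) (fun v : ℝ => g v * Complex.cos (ρ*(t+v))) two_ne_zero t
    rw [show 2*((t-x)/2) - t = -x by ring, show 2*((t+x)/2) - t = x by ring] at h
    push_cast at h
    have h2 : (∫ u in ((t-x)/2)..((t+x)/2), g (2*u - t) * Complex.cos (ρ*(↑t+(2*↑u - ↑t))))
        = ∫ u in ((t-x)/2)..((t+x)/2), g (2*u - t) * Complex.cos (2*ρ*↑u) := by
      apply intervalIntegral.integral_congr
      intro u _
      dsimp only
      have : Complex.cos (ρ*(↑t+(2*↑u - ↑t))) = Complex.cos (2*ρ*↑u) := by ring_nf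
      rw [this]
    rw [h2] at h
    rw [Complex.real_smul] at h
    push_cast at h
    linear_combination (-2:ℂ) * h
  -- step 2
  have key2 : (∫ s in (-x)..x, g s * Complex.cos (ρ*(t-s)))
      = -(2 * ∫ u in ((t-x)/2)..((t+x)/2), g (2*u - t) * Complex.cos (2*ρ*u)) := by
    have h := intervalIntegral.integral_comp_sub_mul
      (a := (t-x)/2) (b := (t+x)/2) (fun v : ℝ => g v * Complex.cos (ρ*(t-v))) two_ne_zero t
    rw [show t - 2*((t+x)/2) = -x by ring, show t - 2*((t-x)/2) = x by ring] at h
    push_cast at h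
    have h2 : (∫ u in ((t-x)/2)..((t+x)/2), g (t - 2*u) * Complex.cos (ρ*(↑t-(↑t - 2*↑u))))
        = ∫ u in ((t-x)/2)..((t+x)/2), -(g (2*u - t) * Complex.cos (2*ρ*↑u)) := by
      apply intervalIntegral.integral_congr
      intro u _
      dsimp only
      have e1 : g (t - 2*u) = -g (2*u - t) := by
        rw [show t - 2*u = -(2*u - t) by ring, hgodd]
      have e2 : Complex.cos (ρ*(↑t-(↑t - 2*↑u))) = Complex.cos (2*ρ*↑u) := by ring_nf
      rw [e1, e2]; ring
    rw [h2, intervalIntegral.integral_neg] at h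
    rw [Complex.real_smul] at h
    push_cast at h
    linear_combination (-2:ℂ) * h
  -- step 3 : extend
  have ext : (∫ u in ((t-x)/2)..((t+x)/2), g (2*u - t) * Complex.cos (2*ρ*u))
      = ∫ u in (-x)..x, g (2*u - t) * Complex.cos (2*ρ*u) := by
    have z1 : (∫ u in (-x)..((t-x)/2), g (2*u - t) * Complex.cos (2*ρ*u)) = 0 := by
      rw [show (0:ℂ) = ∫ u in (-x)..((t-x)/2), (0:ℂ) by simp]
      apply intervalIntegral.integral_congr
      intro u hu
      rw [Set.uIcc_of_le hlo] at hu
      dsimp only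
      have : 2*u - t ≤ -x := by have := hu.2; linarith
      have : x ≤ |2*u - t| := by
        rw [abs_of_nonpos (by linarith)]; linarith
      rw [hgs _ this]; ring
    have z2 : (∫ u in ((t+x)/2)..x, g (2*u - t) * Complex.cos (2*ρ*u)) = 0 := by
      rw [show (0:ℂ) = ∫ u in ((t+x)/2)..x, (0:ℂ) by simp]
      apply intervalIntegral.integral_congr
      intro u hu
      rw [Set.uIcc_of_le hhi] at hu
      dsimp only
      have : x ≤ 2*u - t := by have := hu.1; linarith
      have : x ≤ |2*u - t| := le_trans this (le_abs_self _)
      rw [hgs _ this]; ring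
    have split1 := intervalIntegral.integral_add_adjacent_intervals
      (hGint (-x) ((t-x)/2)) (hGint ((t-x)/2) x)
    have split2 := intervalIntegral.integral_add_adjacent_intervals
      (hGint ((t-x)/2) ((t+x)/2)) (hGint ((t+x)/2) x)
    rw [z1, zero_add] at split1
    rw [z2, add_zero] at split2
    rw [← split1, ← split2]
  -- step 4: assemble
  have hpt : ∀ s ∈ Set.uIcc (-x) x,
      Complex.sin (ρ*t) * (g s * Complex.sin (ρ*s))
        = (2⁻¹:ℂ) * (g s * Complex.cos (ρ*(t-s)) - g s * Complex.cos (ρ*(t+s))) := by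
    intro s _
    have h1 : (ρ*(↑t-↑s) + ρ*(↑t+↑s))/2 = ρ*t := by push_cast; ring
    have h2 : (ρ*(↑t-↑s) - ρ*(↑t+↑s))/2 = -(ρ*s) := by push_cast; ring
    have h := Complex.cos_sub_cos (ρ*(↑t-↑s)) (ρ*(↑t+↑s))
    rw [h1, h2, Complex.sin_neg] at h
    linear_combination (-(2⁻¹:ℂ) * g s) * h
  calc Complex.sin (ρ*t) * ∫ s in (-x)..x, g s * Complex.sin (ρ*s)
      = ∫ s in (-x)..x, Complex.sin (ρ*t) * (g s * Complex.sin (ρ*s)) := by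
        rw [intervalIntegral.integral_const_mul]
    _ = ∫ s in (-x)..x, (2⁻¹:ℂ) * (g s * Complex.cos (ρ*(t-s)) - g s * Complex.cos (ρ*(t+s))) :=
        intervalIntegral.integral_congr hpt
    _ = (2⁻¹:ℂ) * ((∫ s in (-x)..x, g s * Complex.cos (ρ*(t-s)))
          - ∫ s in (-x)..x, g s * Complex.cos (ρ*(t+s))) := by
        rw [intervalIntegral.integral_const_mul]
        congr 1
        apply intervalIntegral.integral_sub <;> (apply Continuous.intervalIntegrable; fun_prop)
    _ = -2 * ∫ u in (-x)..x, g (2*u - t) * Complex.cos (2*ρ*u) := by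
        rw [key1, key2, ← ext]; ring

lemma swap_lemma (f g : ℝ → ℂ) (hf : Continuous f) (hg : Continuous g)
    (x : ℝ) (hx : 0 ≤ x)
    (hfs : ∀ t, x ≤ |t| → f t = 0) (hgs : ∀ s, x ≤ |s| → g s = 0) (ρ : ℂ) :
    (∫ t in (-x)..x, (∫ u in (-x)..x, f t * (g (2*u - t) * Complex.cos (2*ρ*u))))
      = ∫ u in (-x)..x, (∫ t in (-x)..x, f t * (g (2*u - t) * Complex.cos (2*ρ*u))) := by
  set F : ℝ → ℝ → ℂ := fun t u => f t * (g (2*u - t) * Complex.cos (2*ρ*u)) with hF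
  have hxx : (-x) ≤ x := by linarith
  have hF0t : ∀ t u, x ≤ |t| → F t u = 0 := by
    intro t u h; simp [hF, hfs t h]
  have hF0u : ∀ t u, x ≤ |u| → F t u = 0 := by
    intro t u h
    rcases le_or_gt x |t| with h2 | h2
    · exact hF0t t u h2
    · have : x ≤ |2*u - t| := by
        have h3 : |2*u| - |t| ≤ |2*u - t| := abs_sub_abs_le_abs_sub _ _
        have h4 : |2*u| = 2 * |u| := by rw [abs_mul]; norm_num
        nlinarith
      simp [hF, hgs _ this]
  have hFc : Continuous (Function.uncurry F) := by
    apply Continuous.mul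
    · exact hf.comp continuous_fst
    · apply Continuous.mul
      · exact hg.comp (by fun_prop)
      · fun_prop
  have hFcs : HasCompactSupport (Function.uncurry F) := by
    apply HasCompactSupport.intro (isCompact_Icc.prod isCompact_Icc : IsCompact (Set.Icc (-x) x ×ˢ Set.Icc (-x) x))
    rintro ⟨t, u⟩ hp
    rw [Set.mem_prod] at hp
    push_neg at hp
    rcases Classical.em (t ∈ Set.Icc (-x) x) with ht | ht
    · have hu := hp ht
      rw [Set.mem_Icc, ← abs_le] at hu
      exact hF0u t u (le_of_lt (not_le.mp hu))
    · rw [Set.mem_Icc, ← abs_le] at ht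
      exact hF0t t u (le_of_lt (not_le.mp ht))
  have habs : ∀ v : ℝ, v ∉ Set.Ioc (-x) x → x ≤ |v| := by
    intro v hv
    rw [Set.mem_Ioc] at hv
    push_neg at hv
    rcases le_or_gt v (-x) with h | h
    · calc x = -(-x) := by ring
        _ ≤ -v := by linarith
        _ ≤ |v| := neg_le_abs v
    · exact le_trans (hv h).le (le_abs_self v)
  have conv1 : ∀ t : ℝ, (∫ u in (-x)..x, F t u) = ∫ u, F t u := by
    intro t
    rw [intervalIntegral.integral_of_le hxx]
    exact setIntegral_eq_integral_of_forall_compl_eq_zero (fun u hu => hF0u t u (habs u hu))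
  have conv2 : ∀ u : ℝ, (∫ t in (-x)..x, F t u) = ∫ t, F t u := by
    intro u
    rw [intervalIntegral.integral_of_le hxx]
    exact setIntegral_eq_integral_of_forall_compl_eq_zero (fun t ht => hF0t t u (habs t ht))
  calc (∫ t in (-x)..x, (∫ u in (-x)..x, F t u))
      = ∫ t in (-x)..x, (∫ u, F t u) := by simp only [conv1]
    _ = ∫ t, (∫ u, F t u) := by
        rw [intervalIntegral.integral_of_le hxx]
        apply setIntegral_eq_integral_of_forall_compl_eq_zero
        intro t ht
        have : ∀ u, F t u = 0 := fun u => hF0t t u (habs t ht)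
        simp only [this, MeasureTheory.integral_zero]
    _ = ∫ u, (∫ t, F t u) := integral_integral_swap_of_hasCompactSupport hFc hFcs
    _ = ∫ u in (-x)..x, (∫ t, F t u) := by
        rw [intervalIntegral.integral_of_le hxx]
        symm
        apply setIntegral_eq_integral_of_forall_compl_eq_zero
        intro u hu
        have : ∀ t, F t u = 0 := fun t => hF0u t u (habs u hu)
        simp only [this, MeasureTheory.integral_zero]
    _ = ∫ u in (-x)..x, (∫ t in (-x)..x, F t u) := by simp only [conv2]

lemma prodEq (f g : ℝ → ℂ) (hf : Continuous f) (hg : Continuous g)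
    (hfodd : ∀ t, f (-t) = -f t) (hgodd : ∀ s, g (-s) = -g s)
    (x : ℝ) (hx : 0 ≤ x)
    (hfs : ∀ t, x ≤ |t| → f t = 0) (hgs : ∀ s, x ≤ |s| → g s = 0) (ρ : ℂ) :
    -(2 * (∫ t in (0:ℝ)..x, f t * Complex.sin (ρ*t)) * (∫ s in (0:ℝ)..x, g s * Complex.sin (ρ*s)))
      = 2 * ∫ u in (0:ℝ)..x, (∫ t in (2*u - x)..x, f t * g (2*u - t)) * Complex.cos (2*ρ*u) := by
  have hxx : (-x) ≤ x := by linarith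
  have hfe : (∫ t in (-x)..x, f t * Complex.sin (ρ*t))
      = 2 * ∫ t in (0:ℝ)..x, f t * Complex.sin (ρ*t) := by
    apply even_double _ (fun a b => by apply Continuous.intervalIntegrable; fun_prop)
    intro t
    push_cast
    rw [hfodd, show ρ * (-(t:ℂ)) = -(ρ*t) by ring, Complex.sin_neg]
    ring
  have hge : (∫ s in (-x)..x, g s * Complex.sin (ρ*s))
      = 2 * ∫ s in (0:ℝ)..x, g s * Complex.sin (ρ*s) := by
    apply even_double _ (fun a b => by apply Continuous.intervalIntegrable; fun_prop)
    intro s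
    push_cast
    rw [hgodd, show ρ * (-(s:ℂ)) = -(ρ*s) by ring, Complex.sin_neg]
    ring
  set G : ℝ → ℂ := fun u => ∫ t in (-x)..x, f t * g (2*u - t) with hG
  have hGcont : Continuous G := by
    apply intervalIntegral.continuous_parametric_intervalIntegral_of_continuous'
      (f := fun (u : ℝ) (t : ℝ) => f t * g (2*u - t))
    apply Continuous.mul
    · exact hf.comp continuous_snd
    · exact hg.comp (by fun_prop)
  have hGeven : ∀ u, G (-u) = G u := by
    intro u
    have h2 := intervalIntegral.integral_comp_neg (a := -x) (b := x)
      (fun t => f t * g (2*(-u) - t))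
    simp only [neg_neg] at h2
    calc G (-u) = ∫ t in (-x)..x, (fun t => f t * g (2*(-u) - t)) t := rfl
      _ = ∫ t in (-x)..x, (fun t => f t * g (2*(-u) - t)) (-t) := h2.symm
      _ = ∫ t in (-x)..x, f t * g (2*u - t) := by
          apply intervalIntegral.integral_congr
          intro t _
          dsimp only
          rw [hfodd, show 2*(-u) - (-t) = -(2*u - t) by ring, hgodd]
          ring
      _ = G u := rfl
  calc -(2 * (∫ t in (0:ℝ)..x, f t * Complex.sin (ρ*t)) * (∫ s in (0:ℝ)..x, g s * Complex.sin (ρ*s)))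
      = (-(2⁻¹:ℂ) * (∫ s in (-x)..x, g s * Complex.sin (ρ*s)))
          * ∫ t in (-x)..x, f t * Complex.sin (ρ*t) := by rw [hfe, hge]; ring
    _ = ∫ t in (-x)..x, (-(2⁻¹:ℂ) * (∫ s in (-x)..x, g s * Complex.sin (ρ*s)))
          * (f t * Complex.sin (ρ*t)) := (intervalIntegral.integral_const_mul _ _).symm
    _ = ∫ t in (-x)..x, f t * (∫ u in (-x)..x, g (2*u - t) * Complex.cos (2*ρ*u)) := by
        apply intervalIntegral.integral_congr
        intro t ht
        rw [Set.uIcc_of_le hxx, Set.mem_Icc, ← abs_le] at ht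
        have h := inner_eq g hg hgodd x hx hgs ρ t ht
        dsimp only
        linear_combination (-(2⁻¹:ℂ) * f t) * h
    _ = ∫ t in (-x)..x, (∫ u in (-x)..x, f t * (g (2*u - t) * Complex.cos (2*ρ*u))) := by
        apply intervalIntegral.integral_congr
        intro t _
        dsimp only
        rw [← intervalIntegral.integral_const_mul]
    _ = ∫ u in (-x)..x, (∫ t in (-x)..x, f t * (g (2*u - t) * Complex.cos (2*ρ*u))) :=
        swap_lemma f g hf hg x hx hfs hgs ρ
    _ = ∫ u in (-x)..x, G u * Complex.cos (2*ρ*u) := by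
        apply intervalIntegral.integral_congr
        intro u _
        dsimp only
        rw [← intervalIntegral.integral_mul_const]
        apply intervalIntegral.integral_congr
        intro t _
        dsimp only
        ring
    _ = 2 * ∫ u in (0:ℝ)..x, G u * Complex.cos (2*ρ*u) := by
        apply even_double
        · intro a b
          apply Continuous.intervalIntegrable
          exact hGcont.mul (by fun_prop)
        · intro u
          rw [hGeven]
          congr 1
          have : (2*ρ*((-u : ℝ):ℂ)) = -(2*ρ*(u:ℂ)) := by push_cast; ring
          rw [this, Complex.cos_neg]
    _ = 2 * ∫ u in (0:ℝ)..x, (∫ t in (2*u - x)..x, f t * g (2*u - t)) * Complex.cos (2*ρ*u) := by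
        congr 1
        apply intervalIntegral.integral_congr
        intro u hu
        rw [Set.uIcc_of_le hx, Set.mem_Icc] at hu
        dsimp only
        congr 1
        have hint1 : IntervalIntegrable (fun t => f t * g (2*u - t)) volume (-x) (2*u - x) := by
          apply Continuous.intervalIntegrable
          exact hf.mul (hg.comp (by fun_prop))
        have hint2 : IntervalIntegrable (fun t => f t * g (2*u - t)) volume (2*u - x) x := by
          apply Continuous.intervalIntegrable
          exact hf.mul (hg.comp (by fun_prop))
        have hz : (∫ t in (-x)..(2*u - x), f t * g (2*u - t)) = 0 := by
          rw [show (0:ℂ) = ∫ t in (-x)..(2*u - x), (0:ℂ) by simp]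
          apply intervalIntegral.integral_congr
          intro t ht
          rw [Set.uIcc_of_le (by linarith [hu.1] : -x ≤ 2*u - x)] at ht
          dsimp only
          have h1 : x ≤ 2*u - t := by have := ht.2; linarith
          have h2 : x ≤ |2*u - t| := le_trans h1 (le_abs_self _)
          rw [hgs _ h2]
          ring
        show G u = _
        rw [show G u = ∫ t in (-x)..x, f t * g (2*u - t) from rfl,
          ← intervalIntegral.integral_add_adjacent_intervals hint1 hint2, hz, zero_add]


set_option maxHeartbeats 1000000 in
theorem stmt_15 (K Kt : ℝ → ℝ → ℂ)
    (hKcont : ContinuousOn (fun p : ℝ × ℝ => K p.1 p.2) (Set.Icc 0 1 ×ˢ Set.Icc (-1) 1))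
    (hKtcont : ContinuousOn (fun p : ℝ × ℝ => Kt p.1 p.2) (Set.Icc 0 1 ×ˢ Set.Icc (-1) 1))
    (hKodd : ∀ x t, K x (-t) = -K x t) (hKtodd : ∀ x t, Kt x (-t) = -Kt x t)
    (hKsupp : ∀ x t, x < |t| → K x t = 0) (hKtsupp : ∀ x t, x < |t| → Kt x t = 0)
    (S St : ℝ → ℂ → ℂ)
    (hS : ∀ x (ρ : ℂ), S x ρ = Complex.sin (ρ * x) / ρ
      + ∫ t in (0:ℝ)..x, K x t * Complex.sin (ρ * t) / ρ)
    (hSt : ∀ x (ρ : ℂ), St x ρ = Complex.sin (ρ * x) / ρ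
      + ∫ t in (0:ℝ)..x, Kt x t * Complex.sin (ρ * t) / ρ)
    (Q : ℝ → ℝ → ℂ)
    (hQ : ∀ x t, 0 ≤ t → t ≤ x → x ≤ 1 →
      Q x t = 2 * (K x (2 * t - x) + Kt x (2 * t - x)
        + ∫ τ in (2 * t - x)..x, K x τ * Kt x (2 * t - τ)))
    (x : ℝ) (hx : x ∈ Set.Icc (0:ℝ) 1) (ρ : ℂ) (hρ : ρ ≠ 0) :
    1 - 2 * ρ ^ 2 * S x ρ * St x ρ
      = Complex.cos (2 * ρ * x) + ∫ t in (0:ℝ)..x, Q x t * Complex.cos (2 * ρ * t) := by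
  have hx0 : (0:ℝ) ≤ x := hx.1
  have hfc : Continuous (fun t => K x t) := sect_cont K hKcont hKsupp x hx
  have hgc : Continuous (fun t => Kt x t) := sect_cont Kt hKtcont hKtsupp x hx
  have hfodd : ∀ t, K x (-t) = -K x t := hKodd x
  have hgodd : ∀ t, Kt x (-t) = -Kt x t := hKtodd x
  have hfs : ∀ t, x ≤ |t| → K x t = 0 :=
    supp_le (fun t => K x t) hfc x hx0 (fun t ht => hKsupp x t ht)
  have hgs : ∀ t, x ≤ |t| → Kt x t = 0 :=
    supp_le (fun t => Kt x t) hgc x hx0 (fun t ht => hKtsupp x t ht)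
  -- the three main identities
  have hC1 := crossEq (fun t => K x t) hfc hfodd x ρ
  have hC2 := crossEq (fun t => Kt x t) hgc hgodd x ρ
  have hP := prodEq (fun t => K x t) (fun t => Kt x t) hfc hgc hfodd hgodd x hx0 hfs hgs ρ
  -- the fixed-limit version of the inner integral
  set G : ℝ → ℂ := fun u => ∫ t in (-x)..x, K x t * Kt x (2*u - t) with hGdef
  have hGcont : Continuous G := by
    apply intervalIntegral.continuous_parametric_intervalIntegral_of_continuous'
      (f := fun (u : ℝ) (t : ℝ) => K x t * Kt x (2*u - t))
    apply Continuous.mul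
    · exact hfc.comp continuous_snd
    · exact hgc.comp (by fun_prop)
  have hGsub : ∀ u, 0 ≤ u → u ≤ x → G u = ∫ τ in (2*u - x)..x, K x τ * Kt x (2*u - τ) := by
    intro u hu1 hu2
    have hint1 : IntervalIntegrable (fun t => K x t * Kt x (2*u - t)) volume (-x) (2*u - x) := by
      apply Continuous.intervalIntegrable
      exact hfc.mul (hgc.comp (by fun_prop))
    have hint2 : IntervalIntegrable (fun t => K x t * Kt x (2*u - t)) volume (2*u - x) x := by
      apply Continuous.intervalIntegrable
      exact hfc.mul (hgc.comp (by fun_prop))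
    have hz : (∫ t in (-x)..(2*u - x), K x t * Kt x (2*u - t)) = 0 := by
      rw [show (0:ℂ) = ∫ t in (-x)..(2*u - x), (0:ℂ) by simp]
      apply intervalIntegral.integral_congr
      intro t ht
      rw [Set.uIcc_of_le (by linarith : -x ≤ 2*u - x)] at ht
      dsimp only
      have h1 : x ≤ 2*u - t := by have := ht.2; linarith
      have h2 : x ≤ |2*u - t| := le_trans h1 (le_abs_self _)
      rw [hgs _ h2]
      ring
    rw [hGdef]
    dsimp only
    rw [← intervalIntegral.integral_add_adjacent_intervals hint1 hint2, hz, zero_add]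
  have hGI : (2 : ℂ) * (∫ u in (0:ℝ)..x, (∫ t in (2*u - x)..x, K x t * Kt x (2*u - t)) * Complex.cos (2*ρ*u))
      = 2 * ∫ u in (0:ℝ)..x, G u * Complex.cos (2*ρ*u) := by
    congr 1
    apply intervalIntegral.integral_congr
    intro u hu
    rw [Set.uIcc_of_le hx0, Set.mem_Icc] at hu
    dsimp only
    rw [hGsub u hu.1 hu.2]
  -- integrability of the three pieces
  have i1 : IntervalIntegrable (fun u => 2 * (K x (2*u - x) * Complex.cos (2*ρ*u))) volume 0 x := by
    apply Continuous.intervalIntegrable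
    exact continuous_const.mul ((hfc.comp (by fun_prop)).mul (by fun_prop))
  have i2 : IntervalIntegrable (fun u => 2 * (Kt x (2*u - x) * Complex.cos (2*ρ*u))) volume 0 x := by
    apply Continuous.intervalIntegrable
    exact continuous_const.mul ((hgc.comp (by fun_prop)).mul (by fun_prop))
  have i3 : IntervalIntegrable (fun u => 2 * (G u * Complex.cos (2*ρ*u))) volume 0 x := by
    apply Continuous.intervalIntegrable
    exact continuous_const.mul (hGcont.mul (by fun_prop))
  -- rewrite the Q integral
  have hQeq : (∫ t in (0:ℝ)..x, Q x t * Complex.cos (2*ρ*t))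
      = (∫ u in (0:ℝ)..x, 2 * (K x (2*u - x) * Complex.cos (2*ρ*u)))
        + ((∫ u in (0:ℝ)..x, 2 * (Kt x (2*u - x) * Complex.cos (2*ρ*u)))
        + (∫ u in (0:ℝ)..x, 2 * (G u * Complex.cos (2*ρ*u)))) := by
    rw [← intervalIntegral.integral_add i2 i3, ← intervalIntegral.integral_add i1 (i2.add i3)]
    apply intervalIntegral.integral_congr
    intro u hu
    rw [Set.uIcc_of_le hx0, Set.mem_Icc] at hu
    dsimp only
    rw [hQ x u hu.1 hu.2 hx.2, ← hGsub u hu.1 hu.2]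
    ring
  have e1 : (∫ u in (0:ℝ)..x, 2 * (K x (2*u - x) * Complex.cos (2*ρ*u)))
      = 2 * ∫ u in (0:ℝ)..x, K x (2*u - x) * Complex.cos (2*ρ*u) :=
    intervalIntegral.integral_const_mul _ _
  have e2 : (∫ u in (0:ℝ)..x, 2 * (Kt x (2*u - x) * Complex.cos (2*ρ*u)))
      = 2 * ∫ u in (0:ℝ)..x, Kt x (2*u - x) * Complex.cos (2*ρ*u) :=
    intervalIntegral.integral_const_mul _ _
  have e3 : (∫ u in (0:ℝ)..x, 2 * (G u * Complex.cos (2*ρ*u)))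
      = 2 * ∫ u in (0:ℝ)..x, G u * Complex.cos (2*ρ*u) :=
    intervalIntegral.integral_const_mul _ _
  -- cosine double angle
  have hcos : Complex.cos (2*ρ*(x:ℂ)) = 1 - 2 * Complex.sin (ρ*(x:ℂ))^2 := by
    have h1 := Complex.sin_sq_add_cos_sq (ρ*(x:ℂ))
    have h2 := Complex.cos_two_mul (ρ*(x:ℂ))
    rw [show 2*ρ*(x:ℂ) = 2*(ρ*(x:ℂ)) by ring, h2]
    linear_combination 2 * h1
  -- pull the 1/ρ out of the integrals
  have hdiv1 : (∫ t in (0:ℝ)..x, K x t * Complex.sin (ρ*t) / ρ)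
      = (∫ t in (0:ℝ)..x, K x t * Complex.sin (ρ*t)) / ρ :=
    intervalIntegral.integral_div ρ _
  have hdiv2 : (∫ t in (0:ℝ)..x, Kt x t * Complex.sin (ρ*t) / ρ)
      = (∫ t in (0:ℝ)..x, Kt x t * Complex.sin (ρ*t)) / ρ :=
    intervalIntegral.integral_div ρ _
  rw [hS, hSt, hdiv1, hdiv2, hQeq, e1, e2, e3]
  set A0 : ℂ := ∫ t in (0:ℝ)..x, K x t * Complex.sin (ρ*t) with hA0
  set B0 : ℂ := ∫ t in (0:ℝ)..x, Kt x t * Complex.sin (ρ*t) with hB0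
  have hexp : 1 - 2*ρ^2*(Complex.sin (ρ*(x:ℂ))/ρ + A0/ρ)*(Complex.sin (ρ*(x:ℂ))/ρ + B0/ρ)
      = 1 - 2*(Complex.sin (ρ*(x:ℂ)) + A0)*(Complex.sin (ρ*(x:ℂ)) + B0) := by
    field_simp
  rw [hexp]
  linear_combination hC1 + hC2 + hP + hGI - hcos
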